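/- In the braid group B_3, the elements σ_1σ_2σ_1^{-1} and σ_2σ_1σ_2^{-1} generate a free subgroup of rank 2; equivalently, the group homomorphism from the free group on two generators to B_3 sending the generators to σ_1σ_2σ_1^{-1} and σ_2σ_1σ_2^{-1} is injective. -/

import Mathlib

/-- Defining relations of the braid group on `n` strands: the Artin generators are
`σ_0, …, σ_{n-2}` (`0`-based), indexed by `Fin (n-1)`. -/
def braidRels (n : ℕ) : Set (FreeGroup (Fin (n - 1))) :=
  {r | ∃ i j : Fin (n - 1),
    (((j : ℕ) = (i : ℕ) + 1) ∧
      r = FreeGroup.of i * FreeGroup.of j * FreeGroup.of i *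
        (FreeGroup.of j * FreeGroup.of i * FreeGroup.of j)⁻¹) ∨
    (((i : ℕ) + 2 ≤ (j : ℕ)) ∧
      r = FreeGroup.of i * FreeGroup.of j * (FreeGroup.of j * FreeGroup.of i)⁻¹)}

/-- The braid group on `n` strands, as a presented group. -/
abbrev BraidGroup (n : ℕ) := PresentedGroup (braidRels n)

/-- The Artin generator `σ_i` of the braid group (`0`-based index `i : Fin (n-1)`). -/
def braidGen {n : ℕ} (i : Fin (n - 1)) : BraidGroup n := PresentedGroup.of i

/-- The Artin generator `σ_k` for a natural number index `k` (`0`-based);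
equal to `1` if `k` is out of range. -/
def braidGen' (n k : ℕ) : BraidGroup n :=
  if h : k < n - 1 then braidGen ⟨k, h⟩ else 1

/-- The Birman–Ko–Lee generator `a_{ij}` (`0`-based): for `i < j`,
`a_{ij} = σ_i σ_{i+1} ⋯ σ_{j-2} σ_{j-1} σ_{j-2}⁻¹ ⋯ σ_{i+1}⁻¹ σ_i⁻¹`. -/
def bkl (n i j : ℕ) : BraidGroup n :=
  (((List.range (j - 1 - i)).map fun t => braidGen' n (i + t)).prod) *
    braidGen' n (j - 1) *
    (((List.range (j - 1 - i)).map fun t => braidGen' n (i + t)).prod)⁻¹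

/-- The strand index `i` as an element of `Fin n` (from `i : Fin (n-1)`). -/
def finLo {n : ℕ} (i : Fin (n - 1)) : Fin n := ⟨i, by have := i.isLt; omega⟩

/-- The strand index `i+1` as an element of `Fin n` (from `i : Fin (n-1)`). -/
def finHi {n : ℕ} (i : Fin (n - 1)) : Fin n := ⟨(i : ℕ) + 1, by have := i.isLt; omega⟩

/-- The Hurwitz move corresponding to the braid generator `σ_i`:
`σ_i · (g_1,…,g_n) = (g_1,…,g_{i-1}, g_{i+1}, g_{i+1}⁻¹ g_i g_{i+1}, g_{i+2},…,g_n)`. -/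
def hurwitzMove {G : Type*} [Group G] {n : ℕ} (i : Fin (n - 1)) (g : Fin n → G) :
    Fin n → G := fun k =>
  if k = finLo i then g (finHi i)
  else if k = finHi i then (g (finHi i))⁻¹ * g (finLo i) * g (finHi i)
  else g k

open Matrix
abbrev SL2Q := Matrix.SpecialLinearGroup (Fin 2) ℚ
abbrev V2 := {v : Fin 2 → ℚ // v ≠ 0}

instance smulV2 : SMul SL2Q V2 where
  smul g v := ⟨((g : Matrix (Fin 2) (Fin 2) ℚ)).mulVec v.1, by
    intro h
    apply v.2
    have h2 : ((g⁻¹ : SL2Q) : Matrix (Fin 2) (Fin 2) ℚ).mulVec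
        (((g : SL2Q) : Matrix (Fin 2) (Fin 2) ℚ).mulVec v.1) = v.1 := by
      rw [Matrix.mulVec_mulVec, ← Matrix.SpecialLinearGroup.coe_mul, inv_mul_cancel,
        Matrix.SpecialLinearGroup.coe_one, Matrix.one_mulVec]
    rw [h, Matrix.mulVec_zero] at h2
    exact h2.symm⟩

lemma smul_def (g : SL2Q) (v : V2) :
    (g • v).1 = ((g : Matrix (Fin 2) (Fin 2) ℚ)).mulVec v.1 := rfl

instance actV2 : MulAction SL2Q V2 where
  one_smul v := Subtype.ext (by
    rw [smul_def, Matrix.SpecialLinearGroup.coe_one, Matrix.one_mulVec])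
  mul_smul g h v := Subtype.ext (by
    rw [smul_def, smul_def, smul_def, Matrix.mulVec_mulVec, Matrix.SpecialLinearGroup.coe_mul])

lemma smul_coords (g : SL2Q) (v : V2) (i : Fin 2) :
    (g • v).1 i = (g : Matrix (Fin 2) (Fin 2) ℚ) i 0 * v.1 0
      + (g : Matrix (Fin 2) (Fin 2) ℚ) i 1 * v.1 1 := by
  rw [smul_def]
  simp [Matrix.mulVec, dotProduct, Fin.sum_univ_two]

def MA : SL2Q := ⟨!![1, 0; -2, 1], by norm_num [Matrix.det_fin_two_of]⟩
def MB : SL2Q := ⟨!![1, 2; 0, 1], by norm_num [Matrix.det_fin_two_of]⟩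

def XS : Bool → Set V2
  | true => {v | v.1 0 ≠ 0 ∧ v.1 0 * (v.1 0 + v.1 1) ≤ 0}
  | false => {v | v.1 0 * v.1 1 > 0 ∧ v.1 0 * (v.1 1 - v.1 0) ≤ 0}

def YS : Bool → Set V2
  | true => {v | v.1 0 = 0 ∨ v.1 0 * (v.1 1 - v.1 0) > 0}
  | false => {v | v.1 0 ≠ 0 ∧ v.1 0 * v.1 1 ≤ 0 ∧ v.1 0 * (v.1 0 + v.1 1) > 0}

lemma mem_XS_true (v : V2) : v ∈ XS true ↔ v.1 0 ≠ 0 ∧ v.1 0 * (v.1 0 + v.1 1) ≤ 0 := Iff.rfl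
lemma mem_XS_false (v : V2) :
    v ∈ XS false ↔ v.1 0 * v.1 1 > 0 ∧ v.1 0 * (v.1 1 - v.1 0) ≤ 0 := Iff.rfl
lemma mem_YS_true (v : V2) : v ∈ YS true ↔ v.1 0 = 0 ∨ v.1 0 * (v.1 1 - v.1 0) > 0 := Iff.rfl
lemma mem_YS_false (v : V2) :
    v ∈ YS false ↔ v.1 0 ≠ 0 ∧ v.1 0 * v.1 1 ≤ 0 ∧ v.1 0 * (v.1 0 + v.1 1) > 0 := Iff.rfl

lemma nz (v : V2) : v.1 0 ≠ 0 ∨ v.1 1 ≠ 0 := by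
  by_contra h
  push_neg at h
  exact v.2 (funext fun i => by fin_cases i <;> simp [h.1, h.2])

lemma sqpos {x : ℚ} (hx : x ≠ 0) : 0 < x * x := by
  rcases hx.lt_or_gt with h | h
  · exact mul_pos_of_neg_of_neg h h
  · exact mul_pos h h

lemma MA_smul (v : V2) : (MA • v).1 0 = v.1 0 ∧ (MA • v).1 1 = -2 * v.1 0 + v.1 1 := by
  constructor <;> (rw [smul_coords]; norm_num [MA])

lemma MB_smul (v : V2) : (MB • v).1 0 = v.1 0 + 2 * v.1 1 ∧ (MB • v).1 1 = v.1 1 := by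
  constructor <;> (rw [smul_coords]; norm_num [MB])

lemma MA_inv : MA⁻¹ = (show SL2Q from ⟨!![1, 0; 2, 1], by norm_num [Matrix.det_fin_two_of]⟩) := by
  apply inv_eq_of_mul_eq_one_right
  ext i j
  erw [Matrix.SpecialLinearGroup.coe_mul]
  fin_cases i <;> fin_cases j <;>
    norm_num [MA, Matrix.SpecialLinearGroup.coe_mul, Matrix.mul_apply, Fin.sum_univ_two]

lemma MB_inv : MB⁻¹ = (show SL2Q from ⟨!![1, -2; 0, 1], by norm_num [Matrix.det_fin_two_of]⟩) := by
  apply inv_eq_of_mul_eq_one_right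
  ext i j
  erw [Matrix.SpecialLinearGroup.coe_mul]
  fin_cases i <;> fin_cases j <;>
    norm_num [MB, Matrix.SpecialLinearGroup.coe_mul, Matrix.mul_apply, Fin.sum_univ_two]

lemma MAi_smul (v : V2) : (MA⁻¹ • v).1 0 = v.1 0 ∧ (MA⁻¹ • v).1 1 = 2 * v.1 0 + v.1 1 := by
  rw [MA_inv]
  constructor <;> (rw [smul_coords]; norm_num)

lemma MBi_smul (v : V2) : (MB⁻¹ • v).1 0 = v.1 0 - 2 * v.1 1 ∧ (MB⁻¹ • v).1 1 = v.1 1 := by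
  rw [MB_inv]
  constructor <;> (rw [smul_coords]; norm_num; try ring)

lemma key_inj :
    Function.Injective
      (FreeGroup.lift (fun t : Bool => if t then MA else MB) : FreeGroup Bool →* SL2Q) := by
  have XYkey : ∀ (i j : Bool) (v : V2), v ∈ XS i → v ∈ YS j → False := by
    intro i j v hv hv'
    cases i <;> cases j
    · rw [mem_XS_false] at hv; rw [mem_YS_false] at hv'
      exact absurd hv.1 (not_lt.mpr hv'.2.1)
    · rw [mem_XS_false] at hv; rw [mem_YS_true] at hv'
      obtain ⟨h1, h2⟩ := hv
      rcases hv' with h0 | h0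
      · nlinarith
      · nlinarith
    · rw [mem_XS_true] at hv; rw [mem_YS_false] at hv'
      exact absurd hv'.2.2 (not_lt.mpr hv.2)
    · rw [mem_XS_true] at hv; rw [mem_YS_true] at hv'
      obtain ⟨h1, h2⟩ := hv
      rcases hv' with h0 | h0
      · exact h1 h0
      · nlinarith [sqpos h1]
  apply FreeGroup.injective_lift_of_ping_pong _ XS YS
  · -- nonempty
    intro i
    cases i
    · refine ⟨⟨![1, 1], fun h => by simpa using congrFun h 0⟩, ?_⟩
      rw [mem_XS_false]; norm_num
    · refine ⟨⟨![1, -1], fun h => by simpa using congrFun h 0⟩, ?_⟩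
      rw [mem_XS_true]; norm_num
  · -- X pairwise disjoint
    have key : ∀ v : V2, v ∈ XS true → v ∈ XS false → False := by
      intro v hv hv'
      rw [mem_XS_true] at hv; rw [mem_XS_false] at hv'
      obtain ⟨h1, h2⟩ := hv; obtain ⟨h3, h4⟩ := hv'
      nlinarith [sqpos h1]
    intro i j hij
    rw [Function.onFun, Set.disjoint_left]
    intro v hv hv'
    cases i <;> cases j
    · exact hij rfl
    · exact key v hv' hv
    · exact key v hv hv'
    · exact hij rfl
  · -- Y pairwise disjoint
    have key : ∀ v : V2, v ∈ YS true → v ∈ YS false → False := by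
      intro v hv hv'
      rw [mem_YS_true] at hv; rw [mem_YS_false] at hv'
      obtain ⟨h2, h3, h4⟩ := hv'
      rcases hv with h0 | h0
      · exact h2 h0
      · nlinarith [sqpos h2]
    intro i j hij
    rw [Function.onFun, Set.disjoint_left]
    intro v hv hv'
    cases i <;> cases j
    · exact hij rfl
    · exact key v hv' hv
    · exact key v hv hv'
    · exact hij rfl
  · -- X disjoint Y
    intro i j
    rw [Set.disjoint_left]
    intro v hv hv'
    exact XYkey i j v hv hv'
  · -- hX : a i • (Y i)ᶜ ⊆ X i
    rintro i p ⟨v, hv, rfl⟩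
    simp only [Set.mem_compl_iff] at hv
    cases i
    · -- MB
      simp only [if_neg Bool.false_ne_true, mem_XS_false]
      rw [mem_YS_false] at hv
      push_neg at hv
      obtain ⟨c0, c1⟩ := MB_smul v
      rw [c0, c1]
      rcases eq_or_ne (v.1 0) 0 with hx | hx
      · rcases nz v with h | h
        · exact absurd hx h
        · constructor <;> (rw [hx]; nlinarith [sqpos h])
      · rcases le_or_gt (v.1 0 * v.1 1) 0 with hxy | hxy
        · have hxx := hv hx hxy
          have hx2 := sqpos hx
          constructor
          · nlinarith [sq_nonneg (4 * v.1 0 + 3 * v.1 1), sq_nonneg (v.1 1),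
              sq_nonneg (v.1 0 + v.1 1)]
          · nlinarith [sq_nonneg (v.1 0 + v.1 1)]
        · constructor
          · nlinarith [sq_nonneg (v.1 1)]
          · nlinarith [sqpos hx, sq_nonneg (v.1 1)]
    · -- MA
      rw [show (if (true = true) then MA else MB) = MA from rfl, mem_XS_true]
      rw [mem_YS_true] at hv
      push_neg at hv
      obtain ⟨c0, c1⟩ := MA_smul v
      rw [c0, c1]
      exact ⟨hv.1, by nlinarith [hv.2]⟩
  · -- hY : a⁻¹ i • (X i)ᶜ ⊆ Y i
    rintro i p ⟨v, hv, rfl⟩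
    simp only [Set.mem_compl_iff] at hv
    cases i
    · -- MB⁻¹
      simp only [Pi.inv_apply, if_neg Bool.false_ne_true, mem_YS_false]
      rw [mem_XS_false] at hv
      push_neg at hv
      obtain ⟨c0, c1⟩ := MBi_smul v
      rw [c0, c1]
      rcases le_or_gt (v.1 0 * v.1 1) 0 with hxy | hxy
      · rcases eq_or_ne (v.1 1) 0 with hy | hy
        · rcases nz v with h | h
          · refine ⟨by simpa [hy] using h, by simp [hy], ?_⟩
            rw [hy]
            nlinarith [sqpos h]
          · exact absurd hy h
        · have hy2 := sqpos hy
          refine ⟨?_, by nlinarith, by nlinarith [sq_nonneg (v.1 0)]⟩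
          intro h0
          rw [sub_eq_zero] at h0
          rw [h0] at hxy
          nlinarith
      · have h2 := hv hxy
        have hy : v.1 1 ≠ 0 := fun h => by rw [h] at hxy; simp at hxy
        have hy2 := sqpos hy
        refine ⟨?_, ?_, ?_⟩
        · intro h0
          rw [sub_eq_zero] at h0
          rw [h0] at h2
          nlinarith
        · nlinarith
        · nlinarith [sq_nonneg (v.1 0 - v.1 1)]
    · -- MA⁻¹
      simp only [Pi.inv_apply]
      rw [if_pos trivial, mem_YS_true]
      rw [mem_XS_true] at hv
      push_neg at hv
      obtain ⟨c0, c1⟩ := MAi_smul v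
      rw [c0, c1]
      rcases eq_or_ne (v.1 0) 0 with h | h
      · exact Or.inl h
      · exact Or.inr (by nlinarith [hv h])

def T1 : SL2Q := ⟨!![1/2, 1/2; -1/2, 3/2], by norm_num [Matrix.det_fin_two_of]⟩
def T2 : SL2Q := ⟨!![3/2, 1/2; -1/2, 1/2], by norm_num [Matrix.det_fin_two_of]⟩
lemma braid_rel : T1 * T2 * T1 = T2 * T1 * T2 := by
  ext i j
  simp only [Matrix.SpecialLinearGroup.coe_mul]
  fin_cases i <;> fin_cases j <;>
    norm_num [T1, T2, Matrix.SpecialLinearGroup.coe_mul, Matrix.mul_apply, Fin.sum_univ_two]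
lemma MA_rel : T1 * T2 = MA * T1 := by
  ext i j
  simp only [Matrix.SpecialLinearGroup.coe_mul]
  fin_cases i <;> fin_cases j <;>
    norm_num [T1, T2, MA, Matrix.SpecialLinearGroup.coe_mul, Matrix.mul_apply, Fin.sum_univ_two]
lemma MB_rel : T2 * T1 = MB * T2 := by
  ext i j
  simp only [Matrix.SpecialLinearGroup.coe_mul]
  fin_cases i <;> fin_cases j <;>
    norm_num [T1, T2, MB, Matrix.SpecialLinearGroup.coe_mul, Matrix.mul_apply, Fin.sum_univ_two]

lemma braid_rel' : T1 * T2 * T1 * (T2 * T1 * T2)⁻¹ = 1 := by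
  rw [braid_rel]; group

lemma rels_hold : ∀ r ∈ braidRels 3, (FreeGroup.lift (![T1, T2] : Fin (3 - 1) → SL2Q)) r = 1 := by
  rintro r ⟨i, j, (⟨hji, rfl⟩ | ⟨hij, rfl⟩)⟩
  · have hi := i.isLt
    have hj := j.isLt
    have e1 : i = ⟨0, by norm_num⟩ := Fin.ext (show (i : ℕ) = 0 by omega)
    have e2 : j = ⟨1, by norm_num⟩ := Fin.ext (show (j : ℕ) = 1 by omega)
    subst e1 e2
    simp only [_root_.map_mul, map_inv, FreeGroup.lift_apply_of]
    exact braid_rel'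
  · exfalso
    have hj := j.isLt
    have hi := i.isLt
    omega

def phi : BraidGroup 3 →* SL2Q := PresentedGroup.toGroup rels_hold

lemma phi_g0 : phi (braidGen' 3 0) = T1 := by
  rw [show braidGen' 3 0 = (PresentedGroup.of (rels := braidRels 3) ⟨0, by norm_num⟩) from rfl]
  exact PresentedGroup.toGroup.of rels_hold

lemma phi_g1 : phi (braidGen' 3 1) = T2 := by
  rw [show braidGen' 3 1 = (PresentedGroup.of (rels := braidRels 3) ⟨1, by norm_num⟩) from rfl]
  exact PresentedGroup.toGroup.of rels_hold

lemma phi_a : phi (braidGen' 3 0 * braidGen' 3 1 * (braidGen' 3 0)⁻¹) = MA := by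
  rw [_root_.map_mul, _root_.map_mul, map_inv, phi_g0, phi_g1]
  rw [MA_rel]
  group

lemma phi_b : phi (braidGen' 3 1 * braidGen' 3 0 * (braidGen' 3 1)⁻¹) = MB := by
  rw [_root_.map_mul, _root_.map_mul, map_inv, phi_g0, phi_g1]
  rw [MB_rel]
  group

/-- **Lemma.** In the braid group `B_3` the elements `σ_1 σ_2 σ_1⁻¹` and `σ_2 σ_1 σ_2⁻¹`
(written `0`-based as `σ_0 σ_1 σ_0⁻¹` and `σ_1 σ_0 σ_1⁻¹`) generate a free subgroup of
rank `2`: the homomorphism from the free group on two generators sending them to these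
elements is injective. -/
theorem conj_gens_free_B3 :
    Function.Injective
      (FreeGroup.lift (fun t : Bool =>
          if t then braidGen' 3 0 * braidGen' 3 1 * (braidGen' 3 0)⁻¹
          else braidGen' 3 1 * braidGen' 3 0 * (braidGen' 3 1)⁻¹) :
        FreeGroup Bool →* BraidGroup 3) := by
  have hcomp : phi.comp (FreeGroup.lift (fun t : Bool =>
          if t then braidGen' 3 0 * braidGen' 3 1 * (braidGen' 3 0)⁻¹
          else braidGen' 3 1 * braidGen' 3 0 * (braidGen' 3 1)⁻¹))
      = FreeGroup.lift (fun t : Bool => if t then MA else MB) := by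
    refine FreeGroup.ext_hom _ _ fun t => ?_
    cases t
    · simpa using phi_b
    · simpa using phi_a
  have hinj : Function.Injective (⇑phi ∘ ⇑(FreeGroup.lift (fun t : Bool =>
          if t then braidGen' 3 0 * braidGen' 3 1 * (braidGen' 3 0)⁻¹
          else braidGen' 3 1 * braidGen' 3 0 * (braidGen' 3 1)⁻¹))) := by
    rw [show ⇑phi ∘ ⇑(FreeGroup.lift (fun t : Bool =>
          if t then braidGen' 3 0 * braidGen' 3 1 * (braidGen' 3 0)⁻¹
          else braidGen' 3 1 * braidGen' 3 0 * (braidGen' 3 1)⁻¹))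
        = ⇑(phi.comp (FreeGroup.lift (fun t : Bool =>
          if t then braidGen' 3 0 * braidGen' 3 1 * (braidGen' 3 0)⁻¹
          else braidGen' 3 1 * braidGen' 3 0 * (braidGen' 3 1)⁻¹))) from rfl, hcomp]
    exact key_inj
  exact hinj.of_comp
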